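/- For every integer k ≥ 0, lim_{λ→+∞} λ^{k+2} · F^{(k)}(λ) = (−1)^k · (k+1)! · S, where F^{(k)} denotes the k-th derivative of F. -/

import Mathlib

open MeasureTheory Filter Set Topology


lemma aux_psi_bound (k : ℕ) (R : ℝ) (hR : 0 ≤ R) :
    ∃ D : ℝ, 0 ≤ D ∧ ∀ l : ℝ, 2 * R + 1 ≤ l → ∀ x : ℝ, |x| ≤ R →
      |l ^ (k + 2) / (l - x) ^ (k + 1) - l - ((k : ℝ) + 1) * x| ≤ D / l := by
  induction k with
  | zero =>
    refine ⟨2 * R ^ 2, by positivity, fun l hl x hx => ?_⟩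
    have hl0 : (0:ℝ) < l := by linarith
    have hxR : x ≤ R := (abs_le.1 hx).2
    have hlx2 : l / 2 ≤ l - x := by nlinarith [(abs_le.1 hx).1]
    have hlx0 : (0:ℝ) < l - x := by linarith
    have key : l ^ (0 + 2) / (l - x) ^ (0 + 1) - l - (((0:ℕ) : ℝ) + 1) * x
        = x ^ 2 / (l - x) := by
      push_cast
      field_simp
      ring
    rw [key, abs_of_nonneg (by positivity)]
    have h2 : x ^ 2 ≤ R ^ 2 := by nlinarith [(abs_le.1 hx).1]
    calc x ^ 2 / (l - x) ≤ x ^ 2 / (l / 2) :=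
          div_le_div_of_nonneg_left (by positivity) (by positivity) hlx2
      _ = 2 * x ^ 2 / l := by ring
      _ ≤ 2 * R ^ 2 / l := by gcongr
  | succ k ih =>
    obtain ⟨D, hD0, hD⟩ := ih
    refine ⟨2 * D + 2 * ((k : ℝ) + 2) * R ^ 2, by positivity, fun l hl x hx => ?_⟩
    have hl0 : (0:ℝ) < l := by linarith
    have hxR : x ≤ R := (abs_le.1 hx).2
    have hlx2 : l / 2 ≤ l - x := by nlinarith [(abs_le.1 hx).1]
    have hlx0 : (0:ℝ) < l - x := by linarith
    have h2 : x ^ 2 ≤ R ^ 2 := by nlinarith [(abs_le.1 hx).1]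
    have key : l ^ (k + 1 + 2) / (l - x) ^ (k + 1 + 1) - l - (((k+1 : ℕ) : ℝ) + 1) * x
        = (l / (l - x)) * (l ^ (k + 2) / (l - x) ^ (k + 1) - l - ((k : ℝ) + 1) * x)
          + ((k : ℝ) + 2) * x ^ 2 / (l - x) := by
      push_cast
      field_simp
      ring
    rw [key]
    have hratio : |l / (l - x)| ≤ 2 := by
      rw [abs_of_pos (by positivity), div_le_iff₀ hlx0]; linarith
    have hterm2 : |((k : ℝ) + 2) * x ^ 2 / (l - x)| ≤ 2 * ((k : ℝ) + 2) * R ^ 2 / l := by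
      rw [abs_of_nonneg (by positivity)]
      calc ((k : ℝ) + 2) * x ^ 2 / (l - x) ≤ ((k : ℝ) + 2) * x ^ 2 / (l / 2) :=
            div_le_div_of_nonneg_left (by positivity) (by positivity) hlx2
        _ = 2 * ((k : ℝ) + 2) * x ^ 2 / l := by ring
        _ ≤ 2 * ((k : ℝ) + 2) * R ^ 2 / l := by gcongr
    calc |(l / (l - x)) * (l ^ (k + 2) / (l - x) ^ (k + 1) - l - ((k : ℝ) + 1) * x)
          + ((k : ℝ) + 2) * x ^ 2 / (l - x)|
        ≤ |l / (l - x)| * |l ^ (k + 2) / (l - x) ^ (k + 1) - l - ((k : ℝ) + 1) * x|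
          + |((k : ℝ) + 2) * x ^ 2 / (l - x)| := by
          rw [← abs_mul]; exact abs_add_le _ _
      _ ≤ 2 * (D / l) + 2 * ((k : ℝ) + 2) * R ^ 2 / l := by
          have hDl := hD l hl x hx
          have habs := abs_nonneg (l ^ (k + 2) / (l - x) ^ (k + 1) - l - ((k : ℝ) + 1) * x)
          nlinarith [mul_le_mul hratio hDl habs (by norm_num : (0:ℝ) ≤ 2)]
      _ = (2 * D + 2 * ((k : ℝ) + 2) * R ^ 2) / l := by ring


lemma aux_per_int_zero (T : ℝ) (hT : 0 < T) (g h : ℝ → ℝ) (K : NNReal)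
    (hg : LipschitzWith K g) (hper : Function.Periodic g T)
    (hd : ∀ᵐ θ ∂(volume : Measure ℝ), HasDerivAt g (h θ) θ) :
    ∫ θ in (0:ℝ)..T, h θ = 0 := by
  have hgc : Continuous g := hg.continuous
  set μ := (volume : Measure ℝ).restrict (Set.Ioc 0 T) with hμ
  set u : ℕ → ℝ := fun n => ((n : ℝ) + 1)⁻¹ with hu
  have hu_pos : ∀ n, 0 < u n := fun n => by positivity
  set f : ℕ → ℝ → ℝ := fun n θ => (g (θ + u n) - g θ) / u n with hf
  have hfc : ∀ n, Continuous (f n) := fun n =>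
    ((hgc.comp (continuous_id.add continuous_const)).sub hgc).div_const _
  have hmeas : ∀ n, AEStronglyMeasurable (f n) μ := fun n => (hfc n).aestronglyMeasurable
  have hbd : ∀ n, ∀ᵐ θ ∂μ, ‖f n θ‖ ≤ (K : ℝ) := by
    intro n
    filter_upwards with θ
    have hl := hg.dist_le_mul (θ + u n) θ
    rw [Real.dist_eq, Real.dist_eq, add_sub_cancel_left, abs_of_pos (hu_pos n)] at hl
    rw [Real.norm_eq_abs, hf, abs_div, abs_of_pos (hu_pos n),
      div_le_iff₀ (hu_pos n)]
    exact hl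
  have hlim : ∀ᵐ θ ∂μ, Tendsto (fun n => f n θ) atTop (𝓝 (h θ)) := by
    refine ae_restrict_of_ae ?_
    filter_upwards [hd] with θ hθ
    have hslope := hasDerivAt_iff_tendsto_slope.1 hθ
    have hu0 : Tendsto u atTop (𝓝 0) := by
      simpa [hu, one_div] using tendsto_one_div_add_atTop_nhds_zero_nat (𝕜 := ℝ)
    have hseq : Tendsto (fun n => θ + u n) atTop (𝓝[≠] θ) := by
      apply tendsto_nhdsWithin_of_tendsto_nhds_of_eventually_within
      · simpa using tendsto_const_nhds.add hu0
      · filter_upwards with n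
        simp only [Set.mem_compl_iff, Set.mem_singleton_iff]
        intro hcon
        exact (hu_pos n).ne' (by linarith)
    have := hslope.comp hseq
    refine this.congr fun n => ?_
    simp [Function.comp, slope_def_field, hf]
  have hDCT := MeasureTheory.tendsto_integral_of_dominated_convergence
    (F := f) (f := h) (μ := μ) (fun _ => (K : ℝ)) hmeas (integrable_const _) hbd hlim
  have hzero : ∀ n, ∫ θ, f n θ ∂μ = 0 := by
    intro n
    have h1 : ∫ θ, f n θ ∂μ = ∫ θ in (0:ℝ)..T, f n θ :=
      (intervalIntegral.integral_of_le hT.le).symm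
    rw [h1]
    have hint1 : IntervalIntegrable (fun θ => g (θ + u n)) volume 0 T :=
      (hgc.comp (continuous_id.add continuous_const)).intervalIntegrable _ _
    have hint2 : IntervalIntegrable g volume 0 T := hgc.intervalIntegrable _ _
    have h2 : ∫ θ in (0:ℝ)..T, (g (θ + u n) - g θ) = 0 := by
      rw [intervalIntegral.integral_sub hint1 hint2,
        intervalIntegral.integral_comp_add_right g (u n)]
      have hper' := hper.intervalIntegral_add_eq (u n) 0
      rw [zero_add] at hper'
      rw [show (0:ℝ) + u n = u n by ring, show T + u n = u n + T by ring, hper', sub_self]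
    calc ∫ θ in (0:ℝ)..T, f n θ = ∫ θ in (0:ℝ)..T, (g (θ + u n) - g θ) / u n := rfl
      _ = (∫ θ in (0:ℝ)..T, (g (θ + u n) - g θ)) / u n := intervalIntegral.integral_div _ _
      _ = 0 := by rw [h2]; simp
  have heq : ∫ θ, h θ ∂μ = 0 := by
    have : Tendsto (fun _ : ℕ => (0:ℝ)) atTop (𝓝 (∫ θ, h θ ∂μ)) := by
      refine hDCT.congr fun n => ?_
      rw [hzero n]
    exact tendsto_nhds_unique this tendsto_const_nhds
  rw [intervalIntegral.integral_of_le hT.le]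
  exact heq

theorem stmt8
    (S : ℝ) (hS : 0 < S)
    (C Sg c s : ℝ → ℝ)
    (hC_lip : ∃ K : NNReal, LipschitzWith K C)
    (hSg_lip : ∃ K : NNReal, LipschitzWith K Sg)
    (hC_per : Function.Periodic C (2 * S))
    (hSg_per : Function.Periodic Sg (2 * S))
    (hc_meas : Measurable c) (hs_meas : Measurable s)
    (hc_bdd : ∃ B : ℝ, ∀ θ, |c θ| ≤ B) (hs_bdd : ∃ B : ℝ, ∀ θ, |s θ| ≤ B)
    (hconv : ∀ᵐ θ ∂(volume : Measure ℝ), HasDerivAt C (-(s θ)) θ ∧ HasDerivAt Sg (c θ) θ ∧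
      c θ * C θ + s θ * Sg θ = 1)
    (M : ℝ) (hM : IsGreatest (C '' Set.Icc 0 (2 * S)) M)
    (L F : ℝ → ℝ)
    (hL : ∀ l : ℝ, M < l → L l = ∫ θ in (0:ℝ)..(2*S), 1 / (l - C θ))
    (hF : ∀ l : ℝ, M < l → F l = ∫ θ in (0:ℝ)..(2*S), c θ / (l - C θ)) :
    ∀ k : ℕ, Tendsto (fun l : ℝ => l ^ (k + 2) * iteratedDeriv k F l) atTop
      (𝓝 ((-1 : ℝ) ^ k * ((k + 1).factorial : ℝ) * S)) := by
  obtain ⟨KC, hKC⟩ := hC_lip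
  obtain ⟨KS, hKS⟩ := hSg_lip
  have hCc : Continuous C := hKC.continuous
  have hSc : Continuous Sg := hKS.continuous
  have hT0 : (0:ℝ) < 2 * S := by linarith
  -- uniform bounds on periodic continuous functions
  have hbound_per : ∀ (f : ℝ → ℝ), Continuous f → Function.Periodic f (2*S) →
      ∃ R : ℝ, 0 ≤ R ∧ ∀ θ, |f θ| ≤ R := by
    intro f hfc hp
    obtain ⟨R, hR⟩ :=
      (isCompact_Icc (a := (0:ℝ)) (b := 2*S)).exists_bound_of_continuousOn hfc.continuousOn
    refine ⟨max R 0, le_max_right _ _, fun θ => ?_⟩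
    obtain ⟨y, hy, hyeq⟩ := hp.exists_mem_Ico₀ hT0 θ
    rw [hyeq]
    exact le_trans (by simpa [Real.norm_eq_abs] using hR y (Set.Ico_subset_Icc_self hy))
      (le_max_left _ _)
  obtain ⟨R, hR0, hRC⟩ := hbound_per C hCc hC_per
  obtain ⟨RS, hRS0, hRSg⟩ := hbound_per Sg hSc hSg_per
  obtain ⟨B₀, hB₀⟩ := hc_bdd
  set B := max B₀ 0 with hBdef
  have hB0 : 0 ≤ B := le_max_right _ _
  have hB : ∀ θ, |c θ| ≤ B := fun θ => le_trans (hB₀ θ) (le_max_left _ _)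
  have hCM : ∀ θ, C θ ≤ M := by
    intro θ
    obtain ⟨y, hy, hyeq⟩ := hC_per.exists_mem_Ico₀ hT0 θ
    rw [hyeq]
    exact hM.2 ⟨y, Set.Ico_subset_Icc_self hy, rfl⟩
  -- integrability helper
  have hII : ∀ (f : ℝ → ℝ), Measurable f →
      ∀ (D : ℝ), (∀ θ, |f θ| ≤ D) → IntervalIntegrable f volume 0 (2*S) := by
    intro f hfm D hD
    rw [intervalIntegrable_iff_integrableOn_Ioc_of_le hT0.le]
    refine ⟨hfm.aestronglyMeasurable, ?_⟩
    apply MeasureTheory.HasFiniteIntegral.of_bounded (C := D)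
    filter_upwards with θ
    simpa [Real.norm_eq_abs] using hD θ
  -- key integral values
  have hc0 : ∫ θ in (0:ℝ)..(2*S), c θ = 0 :=
    aux_per_int_zero (2*S) hT0 Sg c KS hKS hSg_per (hconv.mono fun θ hθ => hθ.2.1)
  have hprod0 : ∫ θ in (0:ℝ)..(2*S), (c θ * C θ - s θ * Sg θ) = 0 := by
    have hlip : LipschitzWith (⟨RS, hRS0⟩ * KC + ⟨R, hR0⟩ * KS) (fun θ => Sg θ * C θ) := by
      apply LipschitzWith.of_dist_le_mul
      intro x y
      rw [Real.dist_eq, Real.dist_eq]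
      push_cast
      have hC' : |C x - C y| ≤ (KC : ℝ) * |x - y| := by
        have := hKC.dist_le_mul x y
        rwa [Real.dist_eq, Real.dist_eq] at this
      have hS' : |Sg x - Sg y| ≤ (KS : ℝ) * |x - y| := by
        have := hKS.dist_le_mul x y
        rwa [Real.dist_eq, Real.dist_eq] at this
      calc |Sg x * C x - Sg y * C y| = |Sg x * (C x - C y) + C y * (Sg x - Sg y)| := by ring_nf
        _ ≤ |Sg x * (C x - C y)| + |C y * (Sg x - Sg y)| := abs_add_le _ _
        _ = |Sg x| * |C x - C y| + |C y| * |Sg x - Sg y| := by rw [abs_mul, abs_mul]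
        _ ≤ RS * ((KC : ℝ) * |x - y|) + R * ((KS : ℝ) * |x - y|) := by
            gcongr
            · exact hRSg x
            · exact hRC y
        _ = (RS * (KC : ℝ) + R * (KS : ℝ)) * |x - y| := by ring
    have hper2 : Function.Periodic (fun θ => Sg θ * C θ) (2*S) := fun θ => by
      simp [hSg_per θ, hC_per θ]
    have hd2 : ∀ᵐ θ ∂(volume : Measure ℝ),
        HasDerivAt (fun θ => Sg θ * C θ) (c θ * C θ - s θ * Sg θ) θ := by
      filter_upwards [hconv] with θ hθ
      obtain ⟨h1, h2, _⟩ := hθ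
      have := h2.fun_mul h1
      refine this.congr_deriv ?_
      ring
    exact aux_per_int_zero (2*S) hT0 _ _ _ hlip hper2 hd2
  have hint_cC : IntervalIntegrable (fun θ => c θ * C θ) volume 0 (2*S) :=
    hII _ (hc_meas.mul hCc.measurable) (B*R) (fun θ => by
      rw [abs_mul]; exact mul_le_mul (hB θ) (hRC θ) (abs_nonneg _) hB0)
  obtain ⟨Bs₀, hBs₀⟩ := hs_bdd
  have hBs : ∀ θ, |s θ| ≤ max Bs₀ 0 := fun θ => le_trans (hBs₀ θ) (le_max_left _ _)
  have hint_sS : IntervalIntegrable (fun θ => s θ * Sg θ) volume 0 (2*S) :=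
    hII _ (hs_meas.mul hSc.measurable) (max Bs₀ 0 * RS) (fun θ => by
      rw [abs_mul]; exact mul_le_mul (hBs θ) (hRSg θ) (abs_nonneg _) (le_max_right _ _))
  have hsum : (∫ θ in (0:ℝ)..(2*S), (c θ * C θ + s θ * Sg θ)) = 2 * S := by
    have hcongr : ∀ᵐ θ ∂(volume : Measure ℝ), θ ∈ Set.uIoc (0:ℝ) (2*S) →
        c θ * C θ + s θ * Sg θ = (1:ℝ) := by
      filter_upwards [hconv] with θ hθ _
      exact hθ.2.2
    rw [intervalIntegral.integral_congr_ae hcongr]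
    simp
  have hcC : ∫ θ in (0:ℝ)..(2*S), c θ * C θ = S := by
    have h1 := intervalIntegral.integral_add hint_cC hint_sS
    have h2 := intervalIntegral.integral_sub hint_cC hint_sS
    rw [hsum] at h1
    rw [hprod0] at h2
    linarith
  have hc_int : IntervalIntegrable c volume 0 (2*S) := hII _ hc_meas B hB
  -- parametric derivative of the family of integrals
  have habs_div : ∀ (m : ℕ) (x δ : ℝ), 0 < δ → (∀ θ, δ ≤ x - C θ) →
      ∀ θ, |c θ / (x - C θ) ^ m| ≤ B / δ ^ m := by
    intro m x δ hδ hδle θ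
    rw [abs_div, abs_of_pos (pow_pos (lt_of_lt_of_le hδ (hδle θ)) m)]
    exact div_le_div₀ hB0 (hB θ) (pow_pos hδ m) (pow_le_pow_left₀ hδ.le (hδle θ) m)
  have hmeasF : ∀ (x : ℝ) (m : ℕ), Measurable (fun θ => c θ / (x - C θ) ^ m) := fun x m =>
    hc_meas.div ((measurable_const.sub hCc.measurable).pow_const m)
  have hgderiv : ∀ (k : ℕ) (l : ℝ), M < l →
      HasDerivAt (fun x => ∫ θ in (0:ℝ)..(2*S), c θ / (x - C θ) ^ (k+1))
        (-((k:ℝ)+1) * ∫ θ in (0:ℝ)..(2*S), c θ / (l - C θ) ^ (k+2)) l := by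
    intro k l hl
    set ε := (l - M) / 2 with hε
    have hε0 : 0 < ε := by rw [hε]; linarith
    have hball : ∀ x ∈ Metric.ball l ε, ∀ θ, ε ≤ x - C θ := by
      intro x hx θ
      rw [Metric.mem_ball, Real.dist_eq, abs_lt] at hx
      have h1 := hCM θ
      have h2 := hx.1
      rw [hε] at *
      linarith
    have key := intervalIntegral.hasDerivAt_integral_of_dominated_loc_of_deriv_le
      (F := fun x θ => c θ / (x - C θ) ^ (k+1))
      (F' := fun x θ => -((k:ℝ)+1) * (c θ / (x - C θ) ^ (k+2)))
      (bound := fun _ => ((k:ℝ)+1) * (B / ε ^ (k+2))) (a := 0) (b := 2*S) (μ := volume)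
      (x₀ := l) (Metric.ball_mem_nhds l hε0)
      (Filter.Eventually.of_forall fun x => (hmeasF x (k+1)).aestronglyMeasurable)
      (hII _ (hmeasF l (k+1)) (B / (l - M)^(k+1))
        (habs_div (k+1) l (l - M) (by linarith) (fun θ => by linarith [hCM θ])))
      (((hmeasF l (k+2)).const_mul _).aestronglyMeasurable)
      (Filter.Eventually.of_forall fun θ _ => fun x hx => by
        rw [Real.norm_eq_abs, abs_mul, show |(-((k:ℝ)+1))| = (k:ℝ)+1 by
          rw [abs_neg, abs_of_nonneg]; positivity]
        exact mul_le_mul_of_nonneg_left (habs_div (k+2) x ε hε0 (hball x hx) θ)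
          (by positivity))
      intervalIntegrable_const
      (Filter.Eventually.of_forall fun θ _ => fun x hx => by
        have hne : x - C θ ≠ 0 := (lt_of_lt_of_le hε0 (hball x hx θ)).ne'
        have h1 : HasDerivAt (fun y : ℝ => (y - C θ) ^ (k+1))
            (((k:ℝ)+1) * (x - C θ) ^ k) x := by
          have := ((hasDerivAt_id x).sub_const (C θ)).fun_pow (k+1)
          simpa using this
        have h3 := (h1.fun_inv (pow_ne_zero _ hne)).const_mul (c θ)
        have hfeq : (fun y : ℝ => c θ * ((y - C θ) ^ (k+1))⁻¹)
            = fun y : ℝ => c θ / (y - C θ) ^ (k+1) := by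
          funext y; rw [div_eq_mul_inv]
        rw [hfeq] at h3
        refine h3.congr_deriv ?_
        field_simp
        ring)
    have := key.2
    rwa [intervalIntegral.integral_const_mul] at this
  -- iterated derivative formula
  have hiter : ∀ (k : ℕ) (l : ℝ), M < l →
      iteratedDeriv k F l
        = (-1:ℝ)^k * (k.factorial : ℝ) * ∫ θ in (0:ℝ)..(2*S), c θ / (l - C θ)^(k+1) := by
    intro k
    induction k with
    | zero =>
      intro l hl
      rw [iteratedDeriv_zero, hF l hl]
      simp [pow_one]
    | succ k ih =>
      intro l hl
      rw [iteratedDeriv_succ]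
      have hev : iteratedDeriv k F =ᶠ[𝓝 l]
          fun x => (-1:ℝ)^k * (k.factorial : ℝ)
            * ∫ θ in (0:ℝ)..(2*S), c θ / (x - C θ)^(k+1) := by
        filter_upwards [isOpen_Ioi.mem_nhds hl] with x hx
        exact ih x hx
      rw [hev.deriv_eq]
      have hd := (hgderiv k l hl).const_mul ((-1:ℝ)^k * (k.factorial : ℝ))
      rw [hd.deriv]
      rw [Nat.factorial_succ]
      push_cast
      ring
  -- main limit
  intro k
  obtain ⟨D, hD0, hD⟩ := aux_psi_bound k R hR0
  set g : ℝ → ℝ := fun l => ∫ θ in (0:ℝ)..(2*S), c θ / (l - C θ)^(k+1) with hgdef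
  have hgt : Tendsto (fun l => l^(k+2) * g l) atTop (𝓝 (((k:ℝ)+1) * S)) := by
    rw [tendsto_iff_dist_tendsto_zero]
    have hb : Tendsto (fun l : ℝ => B * D * (2*S) / l) atTop (𝓝 0) := by
      have := tendsto_inv_atTop_zero (𝕜 := ℝ).const_mul (B * D * (2*S))
      simpa [div_eq_mul_inv] using this
    apply squeeze_zero' (Filter.Eventually.of_forall fun l => dist_nonneg) ?_ hb
    filter_upwards [eventually_gt_atTop M, eventually_ge_atTop (2*R+1),
      eventually_gt_atTop 0] with l hlM hlR hl0
    rw [Real.dist_eq]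
    have hint_k : IntervalIntegrable (fun θ => c θ / (l - C θ)^(k+1)) volume 0 (2*S) :=
      hII _ (hmeasF l (k+1)) (B / (l - M)^(k+1))
        (habs_div (k+1) l (l - M) (by linarith) (fun θ => by linarith [hCM θ]))
    have e1 : IntervalIntegrable (fun θ => l^(k+2) * (c θ / (l - C θ)^(k+1))) volume 0 (2*S) :=
      hint_k.const_mul _
    have e2 : IntervalIntegrable (fun θ => l * c θ) volume 0 (2*S) := hc_int.const_mul _
    have e3 : IntervalIntegrable (fun θ => ((k:ℝ)+1) * (c θ * C θ)) volume 0 (2*S) :=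
      hint_cC.const_mul _
    have hidentity : (fun θ => c θ * (l^(k+2)/(l - C θ)^(k+1) - l - ((k:ℝ)+1) * C θ))
        = fun θ => l^(k+2) * (c θ / (l - C θ)^(k+1)) - l * c θ - ((k:ℝ)+1) * (c θ * C θ) := by
      funext θ; ring
    have hIcalc : ∫ θ in (0:ℝ)..(2*S),
        c θ * (l^(k+2)/(l - C θ)^(k+1) - l - ((k:ℝ)+1) * C θ)
        = l^(k+2) * g l - ((k:ℝ)+1) * S := by
      rw [hidentity, intervalIntegral.integral_sub (e1.sub e2) e3,
        intervalIntegral.integral_sub e1 e2,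
        intervalIntegral.integral_const_mul, intervalIntegral.integral_const_mul,
        intervalIntegral.integral_const_mul, hc0, hcC, hgdef]
      ring
    rw [← hIcalc]
    have hbnd : ∀ θ ∈ Set.uIoc (0:ℝ) (2*S),
        ‖c θ * (l^(k+2)/(l - C θ)^(k+1) - l - ((k:ℝ)+1) * C θ)‖ ≤ B * (D / l) := by
      intro θ _
      rw [Real.norm_eq_abs, abs_mul]
      exact mul_le_mul (hB θ) (hD l hlR (C θ) (hRC θ)) (abs_nonneg _) hB0
    calc |∫ θ in (0:ℝ)..(2*S), c θ * (l^(k+2)/(l - C θ)^(k+1) - l - ((k:ℝ)+1) * C θ)|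
        ≤ B * (D / l) * |2*S - 0| := by
          simpa [Real.norm_eq_abs] using
            intervalIntegral.norm_integral_le_of_norm_le_const hbnd
      _ = B * D * (2*S) / l := by
          rw [abs_of_pos (by linarith : (0:ℝ) < 2*S - 0)]
          ring
  have hmain := hgt.const_mul ((-1:ℝ)^k * (k.factorial : ℝ))
  have hval : ((-1:ℝ)^k * (k.factorial:ℝ)) * (((k:ℝ)+1) * S)
      = (-1:ℝ)^k * ((k+1).factorial : ℝ) * S := by
    rw [Nat.factorial_succ]; push_cast; ring
  rw [hval] at hmain
  apply hmain.congr'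
  filter_upwards [eventually_gt_atTop M] with l hl
  rw [hiter k l hl, hgdef]
  ring
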